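/- Let r ≥ 1 and m ≥ 1 be integers, let G be a finite abelian group of order N with gcd(N, (2r)!) = 1, and let L and R be disjoint subsets of [m]. If D = (d₁,…,d_m) is uniformly distributed on G^m, then E_D [ #{ (i,j) ∈ L×R : |P_{ij}(0)| ≠ 4r } ] ≤ 6·r²·m²/N, where P_{ij}(0) = {ℓ·dᵢ : 1 ≤ ℓ ≤ 2r} ∪ {ℓ·dⱼ : 1 ≤ ℓ ≤ 2r}. -/

import Mathlib

open Finset

lemma count_le (m : ℕ) (G : Type) [AddCommGroup G] [Fintype G] [DecidableEq G]
    (i : Fin m) (f : (Fin m → G) → Prop) [DecidablePred f]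
    (h : ∀ D D' : Fin m → G, f D → f D' → (∀ k, k ≠ i → D k = D' k) → D = D') :
    (Finset.univ.filter f).card ≤ (Fintype.card G) ^ (m - 1) := by
  have : (Finset.univ.filter f).card ≤ Fintype.card ({k : Fin m // k ≠ i} → G) := by
    apply Finset.card_le_card_of_injOn (fun D => fun k : {k : Fin m // k ≠ i} => D k.1)
    · intro D _; exact Finset.mem_univ _
    · intro D hD D' hD' heq
      simp only [Finset.mem_coe, Finset.mem_filter] at hD hD'
      exact h D D' hD.2 hD'.2 fun k hk => congrFun heq ⟨k, hk⟩
  calc (Finset.univ.filter f).card ≤ _ := this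
    _ = (Fintype.card G) ^ (m - 1) := by
        rw [Fintype.card_fun, Fintype.card_subtype_compl, Fintype.card_subtype_eq,
          Fintype.card_fin]

lemma bad_cases (r : ℕ) (G : Type) [AddCommGroup G] [Fintype G] [DecidableEq G]
    (hcop : Nat.Coprime (Fintype.card G) (Nat.factorial (2 * r)))
    (a b : G)
    (hbad : (((Finset.Icc 1 (2 * r)).image fun ℓ => ℓ • a) ∪
        ((Finset.Icc 1 (2 * r)).image fun ℓ => ℓ • b)).card ≠ 4 * r) :
    a = 0 ∨ b = 0 ∨ ∃ ℓ ∈ Finset.Icc 1 (2 * r), ∃ ℓ' ∈ Finset.Icc 1 (2 * r),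
      ℓ • a = ℓ' • b := by
  have hinj : ∀ n : ℕ, 1 ≤ n → n ≤ 2 * r → Function.Injective (fun x : G => n • x) := by
    intro n h1 h2
    have hd : n ∣ Nat.factorial (2 * r) := Nat.dvd_factorial h1 h2
    have : (Nat.card G).Coprime n := by
      rw [Nat.card_eq_fintype_card]
      exact Nat.Coprime.coprime_dvd_right hd hcop
    exact (nsmulCoprime this).injective
  by_contra hcon
  push_neg at hcon
  obtain ⟨ha, hb, hne⟩ := hcon
  have key : ∀ c : G, c ≠ 0 → Set.InjOn (fun ℓ : ℕ => ℓ • c) (Finset.Icc 1 (2 * r)) := by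
    intro c hc ℓ hℓ ℓ' hℓ' heq
    simp only [Finset.coe_Icc, Set.mem_Icc] at hℓ hℓ'
    have main : ∀ p q : ℕ, 1 ≤ p → p ≤ 2 * r → 1 ≤ q → q ≤ 2 * r → p < q →
        (q : ℕ) • c ≠ p • c := by
      intro p q hp1 hp2 hq1 hq2 hpq hpqeq
      have h0 : (q - p) • c = 0 := by
        rw [sub_nsmul c (le_of_lt hpq), hpqeq]; simp
      have : (q - p) • c = (q - p) • (0 : G) := by simpa using h0
      exact hc (hinj (q - p) (by omega) (by omega) this)
    rcases Nat.lt_trichotomy ℓ ℓ' with h | h | h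
    · exact absurd heq.symm (main ℓ ℓ' hℓ.1 hℓ.2 hℓ'.1 hℓ'.2 h)
    · exact h
    · exact absurd heq (main ℓ' ℓ hℓ'.1 hℓ'.2 hℓ.1 hℓ.2 h)
  have c1 : ((Finset.Icc 1 (2 * r)).image fun ℓ => ℓ • a).card = 2 * r := by
    rw [Finset.card_image_of_injOn (key a ha), Nat.card_Icc]; omega
  have c2 : ((Finset.Icc 1 (2 * r)).image fun ℓ => ℓ • b).card = 2 * r := by
    rw [Finset.card_image_of_injOn (key b hb), Nat.card_Icc]; omega
  have hdisj : Disjoint ((Finset.Icc 1 (2 * r)).image fun ℓ => ℓ • a)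
      ((Finset.Icc 1 (2 * r)).image fun ℓ => ℓ • b) := by
    rw [Finset.disjoint_left]
    rintro x hx hx'
    simp only [Finset.mem_image] at hx hx'
    obtain ⟨ℓ, hℓ, rfl⟩ := hx
    obtain ⟨ℓ', hℓ', he⟩ := hx'
    exact hne ℓ hℓ ℓ' hℓ' he.symm
  rw [Finset.card_union_of_disjoint hdisj, c1, c2] at hbad
  omega

/-- Expected number of pairs `(i,j) ∈ L × R` for which the `4r` elements
`ℓ·d_i, ℓ·d_j (1 ≤ ℓ ≤ 2r)` are not pairwise distinct is at most `6 r² m² / N`. -/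
theorem expected_degenerate_pairs
    (r m : ℕ) (hr : 1 ≤ r) (hm : 1 ≤ m)
    (G : Type) [AddCommGroup G] [Fintype G] [DecidableEq G]
    (hcop : Nat.Coprime (Fintype.card G) (Nat.factorial (2 * r)))
    (L R : Finset (Fin m)) (hLR : Disjoint L R) :
    (1 / (Fintype.card G : ℝ) ^ m) *
        ∑ D : Fin m → G,
          ((((L ×ˢ R).filter fun ij =>
              (((Finset.Icc 1 (2 * r)).image fun ℓ => ℓ • D ij.1) ∪
                ((Finset.Icc 1 (2 * r)).image fun ℓ => ℓ • D ij.2)).card ≠ 4 * r).card : ℝ)) ≤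
      6 * (r : ℝ) ^ 2 * (m : ℝ) ^ 2 / (Fintype.card G : ℝ) := by
  set N := Fintype.card G with hN
  have hNpos : 0 < N := Fintype.card_pos
  -- the key natural-number bound
  have hinjn : ∀ n : ℕ, 1 ≤ n → n ≤ 2 * r → Function.Injective (fun x : G => n • x) := by
    intro n h1 h2
    have hd : n ∣ Nat.factorial (2 * r) := Nat.dvd_factorial h1 h2
    have : (Nat.card G).Coprime n := by
      rw [Nat.card_eq_fintype_card]
      exact Nat.Coprime.coprime_dvd_right hd hcop
    exact (nsmulCoprime this).injective
  have pairbound : ∀ ij : Fin m × Fin m, ij ∈ L ×ˢ R →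
      (Finset.univ.filter fun D : Fin m → G =>
        (((Finset.Icc 1 (2 * r)).image fun ℓ => ℓ • D ij.1) ∪
          ((Finset.Icc 1 (2 * r)).image fun ℓ => ℓ • D ij.2)).card ≠ 4 * r).card
        ≤ 6 * r ^ 2 * N ^ (m - 1) := by
    rintro ⟨i, j⟩ hij
    rw [Finset.mem_product] at hij
    have hij' : i ≠ j := fun h => (Finset.disjoint_left.mp hLR hij.1 (h ▸ hij.2))
    -- subset of union of simple events
    have hsub : (Finset.univ.filter fun D : Fin m → G =>
        (((Finset.Icc 1 (2 * r)).image fun ℓ => ℓ • D i) ∪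
          ((Finset.Icc 1 (2 * r)).image fun ℓ => ℓ • D j)).card ≠ 4 * r) ⊆
        (Finset.univ.filter fun D : Fin m → G => D i = 0) ∪
        (Finset.univ.filter fun D : Fin m → G => D j = 0) ∪
        ((Finset.Icc 1 (2 * r) ×ˢ Finset.Icc 1 (2 * r)).biUnion fun q =>
          Finset.univ.filter fun D : Fin m → G => q.1 • D i = q.2 • D j) := by
      intro D hD
      rw [Finset.mem_filter] at hD
      rcases bad_cases r G hcop (D i) (D j) hD.2 with h | h | ⟨ℓ, hℓ, ℓ', hℓ', h⟩
      · exact Finset.mem_union_left _ (Finset.mem_union_left _ (by simp [h]))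
      · exact Finset.mem_union_left _ (Finset.mem_union_right _ (by simp [h]))
      · refine Finset.mem_union_right _ (Finset.mem_biUnion.mpr ⟨(ℓ, ℓ'), ?_, by simp [h]⟩)
        exact Finset.mem_product.mpr ⟨hℓ, hℓ'⟩
    have b1 : (Finset.univ.filter fun D : Fin m → G => D i = 0).card ≤ N ^ (m - 1) := by
      apply count_le
      intro D D' hD hD' hagree
      funext k
      by_cases hk : k = i
      · subst hk; rw [hD, hD']
      · exact hagree k hk
    have b2 : (Finset.univ.filter fun D : Fin m → G => D j = 0).card ≤ N ^ (m - 1) := by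
      apply count_le
      intro D D' hD hD' hagree
      funext k
      by_cases hk : k = j
      · subst hk; rw [hD, hD']
      · exact hagree k hk
    have b3 : ((Finset.Icc 1 (2 * r) ×ˢ Finset.Icc 1 (2 * r)).biUnion fun q =>
          Finset.univ.filter fun D : Fin m → G => q.1 • D i = q.2 • D j).card ≤
        (2 * r) * (2 * r) * N ^ (m - 1) := by
      calc _ ≤ ∑ q ∈ Finset.Icc 1 (2 * r) ×ˢ Finset.Icc 1 (2 * r),
            (Finset.univ.filter fun D : Fin m → G => q.1 • D i = q.2 • D j).card :=
          Finset.card_biUnion_le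
        _ ≤ ∑ q ∈ Finset.Icc 1 (2 * r) ×ˢ Finset.Icc 1 (2 * r), N ^ (m - 1) := by
            apply Finset.sum_le_sum
            rintro ⟨ℓ, ℓ'⟩ hq
            rw [Finset.mem_product, Finset.mem_Icc, Finset.mem_Icc] at hq
            apply count_le m G i
            intro D D' hD hD' hagree
            have hDj : D j = D' j := hagree j (Ne.symm hij')
            have : ℓ • D i = ℓ • D' i := by
              rw [hD, hDj, ← hD']
            have hDi : D i = D' i := hinjn ℓ hq.1.1 hq.1.2 this
            funext k
            by_cases hk : k = i
            · subst hk; exact hDi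
            · exact hagree k hk
        _ = (2 * r) * (2 * r) * N ^ (m - 1) := by
            rw [Finset.sum_const, Finset.card_product, Nat.card_Icc, smul_eq_mul,
              Nat.add_sub_cancel]
    refine le_trans (Finset.card_le_card hsub) ?_
    refine le_trans (Finset.card_union_le _ _) ?_
    refine le_trans (Nat.add_le_add (Finset.card_union_le _ _) le_rfl) ?_
    have hNp : 0 < N ^ (m - 1) := Nat.pow_pos hNpos
    have := Nat.add_le_add (Nat.add_le_add b1 b2) b3
    refine le_trans this ?_
    have heq : N ^ (m - 1) + N ^ (m - 1) + 2 * r * (2 * r) * N ^ (m - 1)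
        = (2 + 4 * r ^ 2) * N ^ (m - 1) := by ring
    rw [heq]
    exact Nat.mul_le_mul_right _ (by nlinarith)
  -- total natural bound
  have total : (∑ D : Fin m → G,
      ((L ×ˢ R).filter fun ij =>
        (((Finset.Icc 1 (2 * r)).image fun ℓ => ℓ • D ij.1) ∪
          ((Finset.Icc 1 (2 * r)).image fun ℓ => ℓ • D ij.2)).card ≠ 4 * r).card)
      ≤ 6 * r ^ 2 * m ^ 2 * N ^ (m - 1) := by
    have swap : (∑ D : Fin m → G,
        ((L ×ˢ R).filter fun ij =>
          (((Finset.Icc 1 (2 * r)).image fun ℓ => ℓ • D ij.1) ∪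
            ((Finset.Icc 1 (2 * r)).image fun ℓ => ℓ • D ij.2)).card ≠ 4 * r).card)
        = ∑ ij ∈ L ×ˢ R, (Finset.univ.filter fun D : Fin m → G =>
            (((Finset.Icc 1 (2 * r)).image fun ℓ => ℓ • D ij.1) ∪
              ((Finset.Icc 1 (2 * r)).image fun ℓ => ℓ • D ij.2)).card ≠ 4 * r).card := by
      simp only [Finset.card_filter]
      rw [Finset.sum_comm]
    rw [swap]
    calc _ ≤ ∑ _ij ∈ L ×ˢ R, 6 * r ^ 2 * N ^ (m - 1) :=
        Finset.sum_le_sum pairbound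
      _ = (L ×ˢ R).card * (6 * r ^ 2 * N ^ (m - 1)) := by
          rw [Finset.sum_const, smul_eq_mul]
      _ ≤ (m * m) * (6 * r ^ 2 * N ^ (m - 1)) := by
          apply Nat.mul_le_mul_right
          calc (L ×ˢ R).card = L.card * R.card := Finset.card_product L R
            _ ≤ m * m := Nat.mul_le_mul (le_trans (Finset.card_le_card (Finset.subset_univ L))
                (by simp)) (le_trans (Finset.card_le_card (Finset.subset_univ R)) (by simp))
      _ = 6 * r ^ 2 * m ^ 2 * N ^ (m - 1) := by ring
  -- pass to the reals
  have hNR : (0 : ℝ) < (N : ℝ) := by exact_mod_cast hNpos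
  have hNmR : (0 : ℝ) < (N : ℝ) ^ m := pow_pos hNR m
  have totalR := (Nat.cast_le (α := ℝ)).mpr total
  push_cast at totalR
  rw [one_div, inv_mul_eq_div, div_le_div_iff₀ hNmR hNR]
  have hpow : (N:ℝ) ^ m = (N:ℝ) ^ (m - 1) * N := by
    conv_lhs => rw [← Nat.succ_pred_eq_of_pos hm]
    rw [pow_succ, Nat.pred_eq_sub_one]
  refine le_trans (mul_le_mul_of_nonneg_right totalR hNR.le) ?_
  rw [hpow]
  exact le_of_eq (by ring)
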